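/- Let I be an independent set in the hypercube Q_d with bipartition classes E, O, and let [·] denote closure ([A] = {v on the same side as A : N(v) ⊆ N(A)}). Then there are no edges of Q_d between [I ∩ E] and [I ∩ O]. -/

import Mathlib

/-- The `d`-dimensional hypercube graph. -/
def cubeGraph (d : ℕ) : SimpleGraph (Fin d → ZMod 2) where
  Adj x y := hammingDist x y = 1
  symm := by constructor; intro x y h; exact (hammingDist_comm y x).trans h
  loopless := by constructor; intro x h; simp [hammingDist_self] at h

/-- An independent set: no two of its vertices are adjacent. -/
def IsIndep {V : Type*} (G : SimpleGraph V) (s : Set V) : Prop :=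
  ∀ u ∈ s, ∀ v ∈ s, ¬ G.Adj u v

/-- The even bipartition class of the hypercube. -/
def evenSide (d : ℕ) : Set (Fin d → ZMod 2) := {v | ∑ i, v i = 0}

/-- The odd bipartition class of the hypercube. -/
def oddSideSet (d : ℕ) : Set (Fin d → ZMod 2) := {v | ∑ i, v i = 1}

/-- The neighbourhood of a set of vertices. -/
def nbhd {V : Type*} (G : SimpleGraph V) (A : Set V) : Set V := {y | ∃ a ∈ A, G.Adj a y}

/-- The closure of `A` within a side `X`: vertices of `X` all of whose neighbours lie
in `N(A)`. -/
def closure' {V : Type*} (G : SimpleGraph V) (X A : Set V) : Set V :=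
  {v ∈ X | G.neighborSet v ⊆ nbhd G A}

/-- for an independent set `I` of `Q_d`, there are no edges between
`[I ∩ E]` and `[I ∩ O]`. -/
theorem no_edges_between_closures (d : ℕ) (I : Set (Fin d → ZMod 2))
    (hI : IsIndep (cubeGraph d) I) :
    ∀ u ∈ closure' (cubeGraph d) (evenSide d) (I ∩ evenSide d),
      ∀ v ∈ closure' (cubeGraph d) (oddSideSet d) (I ∩ oddSideSet d),
        ¬ (cubeGraph d).Adj u v := by
  rintro u ⟨hu, huN⟩ v ⟨hv, hvN⟩ huv
  obtain ⟨a, ha, hav⟩ := huN (show v ∈ (cubeGraph d).neighborSet u from huv)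
  obtain ⟨b, hb, hba⟩ := hvN (show a ∈ (cubeGraph d).neighborSet v from hav.symm)
  exact hI b hb.1 a ha.1 hba
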